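/- Let N ≥ 1 be an integer and K, K₁ > 0. There exists M > 0, depending only on N, K, K₁, with the following property. Let f : ℝ²×ℝ² → [0,∞) be measurable with ∬_{ℝ²×ℝ²} (1+|x|+|v|²) f(x,v) dx dv ≤ K, set ρ(x) = ∫_{ℝ²} f(x,v) dv, and let ξ₁,…,ξ_N, η₁,…,η_N ∈ ℝ² with ξ_α ≠ ξ_β for α ≠ β and Σ_α (|ξ_α| + |η_α|) ≤ K. Assume the integrals ∬_{ℝ²×ℝ²} |ln|x−y|| ρ(x)ρ(y) dx dy and Σ_α ∫_{ℝ²} |ln|x−ξ_α|| ρ(x) dx are finite, and that the energy 𝓔 = (1/2)∬ |v|² f dx dv + (1/2)Σ_α |η_α|² − (1/2)∬ ln|x−y| ρ(x)ρ(y) dx dy − Σ_α ∫ ln|x−ξ_α| ρ(x) dx − (1/2)Σ_{α≠β} ln|ξ_α−ξ_β| satisfies 𝓔 ≤ K₁. Then |ξ_α − ξ_β| ≥ M for all α ≠ β. -/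

import Mathlib

open MeasureTheory Real Filter
open scoped ENNReal Topology

noncomputable abbrev E2 := EuclideanSpace ℝ (Fin 2)

lemma iter_int {g : E2 × E2 → ℝ} (hg : Integrable g) :
    (∫ x : E2, ∫ v : E2, g (x, v)) = ∫ z : E2 × E2, g z := by
  have hg' : Integrable (fun z : E2 × E2 => g (z.1, z.2))
      ((volume : Measure E2).prod volume) := by
    rw [← Measure.volume_eq_prod]; simpa using hg
  have h := integral_integral (f := fun x v => g (x, v)) hg'
  rw [Measure.volume_eq_prod]
  simpa using h

set_option maxHeartbeats 1000000 in
/-- Given `N ≥ 1` and `K, K₁ > 0`, there is `M > 0` depending only on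
`N, K, K₁` such that: for any nonnegative measurable phase-space density `f` with
`∬ (1+|x|+|v|²) f ≤ K`, spatial density `ρ(x) = ∫ f(x,v) dv`, and point charges
`ξ_α ≠ ξ_β` (`α ≠ β`) with velocities `η_α` satisfying `Σ (|ξ_α|+|η_α|) ≤ K`, if the
logarithmic interaction integrals are finite and the total energy `𝓔 ≤ K₁`, then
`|ξ_α − ξ_β| ≥ M` for all `α ≠ β`. -/
theorem stmt2 (N : ℕ) (hN : 1 ≤ N) (K K₁ : ℝ) (hK : 0 < K) (hK₁ : 0 < K₁) :
    ∃ M : ℝ, 0 < M ∧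
      ∀ (f : E2 × E2 → ℝ) (ξ η : Fin N → E2),
        Measurable f → (∀ z, 0 ≤ f z) →
        (∀ α β, α ≠ β → ξ α ≠ ξ β) →
        Integrable (fun z : E2 × E2 => (1 + ‖z.1‖ + ‖z.2‖ ^ 2) * f z) →
        (∫ z : E2 × E2, (1 + ‖z.1‖ + ‖z.2‖ ^ 2) * f z) ≤ K →
        (∑ α, (‖ξ α‖ + ‖η α‖)) ≤ K →
        Integrable (fun q : E2 × E2 =>
          |Real.log ‖q.1 - q.2‖| * ((∫ v, f (q.1, v)) * (∫ v, f (q.2, v)))) →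
        (∀ α, Integrable (fun x : E2 => |Real.log ‖x - ξ α‖| * (∫ v, f (x, v)))) →
        (1 / 2) * (∫ z : E2 × E2, ‖z.2‖ ^ 2 * f z) + (1 / 2) * (∑ α, ‖η α‖ ^ 2)
            - (1 / 2) * (∫ q : E2 × E2,
                Real.log ‖q.1 - q.2‖ * ((∫ v, f (q.1, v)) * (∫ v, f (q.2, v))))
            - (∑ α, ∫ x : E2, Real.log ‖x - ξ α‖ * (∫ v, f (x, v)))
            - (1 / 2) * (∑ α, ∑ β ∈ Finset.univ.erase α, Real.log ‖ξ α - ξ β‖) ≤ K₁ →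
        ∀ α β, α ≠ β → M ≤ ‖ξ α - ξ β‖ := by
  set L : ℝ := (2 * (K₁ + 2 * K ^ 2 + N * K) + (2 * N + N * N) * K) / 2 with hL
  refine ⟨Real.exp (-L), Real.exp_pos _, ?_⟩
  intro f ξ η hfm hf0 hξne hInt hIntK hξηK hI2int hI1int hE α β hαβ
  have hρ0 : ∀ x : E2, 0 ≤ ∫ v, f (x, v) := fun x => integral_nonneg fun v => hf0 _
  have hρm : StronglyMeasurable (fun x : E2 => ∫ v, f (x, v)) :=
    hfm.stronglyMeasurable.integral_prod_right'
  -- basic integrabilities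
  have hf_int : Integrable f := by
    refine hInt.mono' hfm.aestronglyMeasurable (ae_of_all _ fun z => ?_)
    rw [Real.norm_of_nonneg (hf0 z)]
    nlinarith [hf0 z, norm_nonneg z.1, sq_nonneg ‖z.2‖]
  have hg1 : Integrable (fun z : E2 × E2 => (1 + ‖z.1‖) * f z) := by
    refine hInt.mono' ((measurable_const.add measurable_fst.norm).mul
      hfm).aestronglyMeasurable (ae_of_all _ fun z => ?_)
    rw [Real.norm_of_nonneg (mul_nonneg (by positivity) (hf0 z))]
    nlinarith [hf0 z, norm_nonneg z.1, sq_nonneg ‖z.2‖]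
  have hgx : Integrable (fun z : E2 × E2 => ‖z.1‖ * f z) := by
    refine hInt.mono' (measurable_fst.norm.mul hfm).aestronglyMeasurable
      (ae_of_all _ fun z => ?_)
    rw [Real.norm_of_nonneg (mul_nonneg (norm_nonneg _) (hf0 z))]
    nlinarith [hf0 z, norm_nonneg z.1, sq_nonneg ‖z.2‖]
  -- integrability of weighted spatial density
  have hx1ρ : Integrable (fun x : E2 => (1 + ‖x‖) * ∫ v, f (x, v)) := by
    have hg1' : Integrable (fun z : E2 × E2 => (1 + ‖z.1‖) * f z)
        ((volume : Measure E2).prod volume) := by rw [← Measure.volume_eq_prod]; exact hg1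
    have h := hg1'.integral_prod_left
    simpa only [integral_const_mul] using h
  have hρ_int : Integrable (fun x : E2 => ∫ v, f (x, v)) := by
    refine hx1ρ.mono' hρm.aestronglyMeasurable (ae_of_all _ fun x => ?_)
    rw [Real.norm_of_nonneg (hρ0 x)]
    nlinarith [hρ0 x, norm_nonneg x]
  have hxρ_int : Integrable (fun x : E2 => ‖x‖ * ∫ v, f (x, v)) := by
    refine hx1ρ.mono' (measurable_norm.mul hρm.measurable).aestronglyMeasurable
      (ae_of_all _ fun x => ?_)
    rw [Real.norm_of_nonneg (mul_nonneg (norm_nonneg _) (hρ0 x))]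
    nlinarith [hρ0 x, norm_nonneg x]
  -- moment bounds
  have hρI0 : 0 ≤ ∫ x : E2, ∫ v, f (x, v) := integral_nonneg fun x => hρ0 x
  have hxρI0 : 0 ≤ ∫ x : E2, ‖x‖ * ∫ v, f (x, v) :=
    integral_nonneg fun x => mul_nonneg (norm_nonneg _) (hρ0 x)
  have hρK : (∫ x : E2, ∫ v, f (x, v)) ≤ K := by
    rw [iter_int hf_int]
    refine le_trans (integral_mono hf_int hInt fun z => ?_) hIntK
    nlinarith [hf0 z, norm_nonneg z.1, sq_nonneg ‖z.2‖]
  have hxρK : (∫ x : E2, ‖x‖ * ∫ v, f (x, v)) ≤ K := by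
    have h := iter_int hgx
    simp only [integral_const_mul] at h
    rw [h]
    refine le_trans (integral_mono hgx hInt fun z => ?_) hIntK
    nlinarith [hf0 z, norm_nonneg z.1, sq_nonneg ‖z.2‖]
  -- bound on the pair interaction integral
  have hD2a : Integrable (fun q : E2 × E2 =>
      (‖q.1‖ * ∫ v, f (q.1, v)) * ∫ v, f (q.2, v))
      ((volume : Measure E2).prod volume) := hxρ_int.mul_prod hρ_int
  have hD2b : Integrable (fun q : E2 × E2 =>
      (∫ v, f (q.1, v)) * (‖q.2‖ * ∫ v, f (q.2, v)))
      ((volume : Measure E2).prod volume) := hρ_int.mul_prod hxρ_int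
  have hD2 : Integrable (fun q : E2 × E2 =>
      (‖q.1‖ + ‖q.2‖) * ((∫ v, f (q.1, v)) * ∫ v, f (q.2, v))) := by
    rw [Measure.volume_eq_prod]
    exact (hD2a.add hD2b).congr (ae_of_all _ fun q => by simp only [Pi.add_apply]; ring)
  have hI2int' : Integrable (fun q : E2 × E2 =>
      Real.log ‖q.1 - q.2‖ * ((∫ v, f (q.1, v)) * ∫ v, f (q.2, v))) := by
    refine hI2int.mono' ?_ (ae_of_all _ fun q => ?_)
    · exact ((Real.measurable_log.comp (measurable_fst.sub measurable_snd).norm).mul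
        ((hρm.measurable.comp measurable_fst).mul
          (hρm.measurable.comp measurable_snd))).aestronglyMeasurable
    · rw [Real.norm_eq_abs, abs_mul, abs_of_nonneg (mul_nonneg (hρ0 _) (hρ0 _))]
  have hI2 : (∫ q : E2 × E2,
      Real.log ‖q.1 - q.2‖ * ((∫ v, f (q.1, v)) * ∫ v, f (q.2, v))) ≤ 2 * K ^ 2 := by
    have h1 : (∫ q : E2 × E2,
        Real.log ‖q.1 - q.2‖ * ((∫ v, f (q.1, v)) * ∫ v, f (q.2, v))) ≤
        ∫ q : E2 × E2, (‖q.1‖ + ‖q.2‖) * ((∫ v, f (q.1, v)) * ∫ v, f (q.2, v)) := by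
      refine integral_mono hI2int' hD2 fun q => ?_
      refine mul_le_mul_of_nonneg_right ?_ (mul_nonneg (hρ0 _) (hρ0 _))
      exact le_trans (Real.log_le_self (norm_nonneg _)) (norm_sub_le _ _)
    refine le_trans h1 ?_
    have hsplit : (fun q : E2 × E2 =>
        (‖q.1‖ + ‖q.2‖) * ((∫ v, f (q.1, v)) * ∫ v, f (q.2, v))) =
        fun q : E2 × E2 => (‖q.1‖ * ∫ v, f (q.1, v)) * (∫ v, f (q.2, v)) +
          (∫ v, f (q.1, v)) * (‖q.2‖ * ∫ v, f (q.2, v)) := funext fun q => by ring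
    rw [Measure.volume_eq_prod, hsplit, integral_add hD2a hD2b,
      integral_prod_mul (f := fun x : E2 => ‖x‖ * ∫ v, f (x, v))
        (g := fun y : E2 => ∫ v, f (y, v)),
      integral_prod_mul (f := fun x : E2 => ∫ v, f (x, v))
        (g := fun y : E2 => ‖y‖ * ∫ v, f (y, v))]
    have e1 := mul_le_mul hxρK hρK hρI0 hK.le
    have e2 := mul_le_mul hρK hxρK hxρI0 hK.le
    have : K * K = K ^ 2 := (sq K).symm
    linarith
  -- bound on the charge-plasma interaction integrals
  have hξK : (∑ a, ‖ξ a‖) ≤ K := by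
    refine le_trans (Finset.sum_le_sum fun a _ => ?_) hξηK
    exact le_add_of_nonneg_right (norm_nonneg _)
  have hI1 : (∑ a, ∫ x : E2, Real.log ‖x - ξ a‖ * ∫ v, f (x, v)) ≤ N * K + K * K := by
    have hterm : ∀ a : Fin N,
        (∫ x : E2, Real.log ‖x - ξ a‖ * ∫ v, f (x, v)) ≤ K + ‖ξ a‖ * K := by
      intro a
      have hDa : Integrable (fun x : E2 => (‖x‖ + ‖ξ a‖) * ∫ v, f (x, v)) :=
        (hxρ_int.add (hρ_int.const_mul ‖ξ a‖)).congr (ae_of_all _ fun x => by simp only [Pi.add_apply]; ring)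
      have hint : Integrable (fun x : E2 => Real.log ‖x - ξ a‖ * ∫ v, f (x, v)) := by
        refine (hI1int a).mono' ?_ (ae_of_all _ fun x => ?_)
        · exact ((Real.measurable_log.comp (measurable_id.sub measurable_const).norm).mul
            hρm.measurable).aestronglyMeasurable
        · rw [Real.norm_eq_abs, abs_mul, abs_of_nonneg (hρ0 _)]
      have h1 : (∫ x : E2, Real.log ‖x - ξ a‖ * ∫ v, f (x, v)) ≤
          ∫ x : E2, (‖x‖ + ‖ξ a‖) * ∫ v, f (x, v) := by
        refine integral_mono hint hDa fun x => ?_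
        refine mul_le_mul_of_nonneg_right ?_ (hρ0 x)
        exact le_trans (Real.log_le_self (norm_nonneg _)) (norm_sub_le _ _)
      refine le_trans h1 ?_
      have hsplit : (fun x : E2 => (‖x‖ + ‖ξ a‖) * ∫ v, f (x, v)) =
          fun x : E2 => ‖x‖ * (∫ v, f (x, v)) + ‖ξ a‖ * ∫ v, f (x, v) :=
        funext fun x => by ring
      rw [hsplit, integral_add hxρ_int (hρ_int.const_mul _), integral_const_mul]
      exact add_le_add hxρK (mul_le_mul_of_nonneg_left hρK (norm_nonneg _))
    calc (∑ a, ∫ x : E2, Real.log ‖x - ξ a‖ * ∫ v, f (x, v))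
        ≤ ∑ a : Fin N, (K + ‖ξ a‖ * K) := Finset.sum_le_sum fun a _ => hterm a
      _ = N * K + (∑ a, ‖ξ a‖) * K := by
          rw [Finset.sum_add_distrib, Finset.sum_const, Finset.card_univ, Fintype.card_fin,
            nsmul_eq_mul, Finset.sum_mul]
      _ ≤ N * K + K * K := by
          have := mul_le_mul_of_nonneg_right hξK hK.le
          linarith
  -- nonnegative kinetic terms
  have hA : 0 ≤ ∫ z : E2 × E2, ‖z.2‖ ^ 2 * f z :=
    integral_nonneg fun z => mul_nonneg (sq_nonneg _) (hf0 z)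
  have hB : 0 ≤ ∑ a, ‖η a‖ ^ 2 := Finset.sum_nonneg fun a _ => sq_nonneg _
  -- lower bound on the pair log sum from the energy bound
  set S : ℝ := ∑ a, ∑ b ∈ Finset.univ.erase a, Real.log ‖ξ a - ξ b‖ with hS
  have hSlow : -2 * (K₁ + 2 * K ^ 2 + N * K) ≤ S := by linarith
  -- upper bound on S in terms of log ‖ξ α - ξ β‖
  have hgK : ∀ a b : Fin N, a ≠ b → Real.log ‖ξ a - ξ b‖ ≤ K := by
    intro a b hab
    refine le_trans (Real.log_le_self (norm_nonneg _)) (le_trans (norm_sub_le _ _) ?_)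
    have h1 : ‖ξ a‖ + ‖ξ b‖ = ∑ c ∈ ({a, b} : Finset (Fin N)), ‖ξ c‖ :=
      (Finset.sum_pair (f := fun c => ‖ξ c‖) hab).symm
    rw [h1]
    refine le_trans (Finset.sum_le_sum_of_subset_of_nonneg (Finset.subset_univ _)
      fun c _ _ => norm_nonneg _) hξK
  have hNcard : ∀ a : Fin N, (Finset.univ.erase a).card ≤ N := fun a =>
    le_trans (Finset.card_erase_le) (by simp)
  have hinner : ∀ a : Fin N, (∑ b ∈ Finset.univ.erase a, Real.log ‖ξ a - ξ b‖) ≤ N * K := by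
    intro a
    calc (∑ b ∈ Finset.univ.erase a, Real.log ‖ξ a - ξ b‖)
        ≤ (Finset.univ.erase a).card • K :=
          Finset.sum_le_card_nsmul _ _ _ fun b hb =>
            hgK a b (Finset.ne_of_mem_erase hb).symm
      _ = ((Finset.univ.erase a).card : ℝ) * K := nsmul_eq_mul _ _
      _ ≤ N * K := by
          refine mul_le_mul_of_nonneg_right ?_ hK.le
          exact_mod_cast hNcard a
  have hβmem : β ∈ Finset.univ.erase α := Finset.mem_erase.mpr ⟨hαβ.symm, Finset.mem_univ _⟩
  have hαmem : α ∈ Finset.univ.erase β := Finset.mem_erase.mpr ⟨hαβ, Finset.mem_univ _⟩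
  have hinnerα : (∑ b ∈ Finset.univ.erase α, Real.log ‖ξ α - ξ b‖) ≤
      Real.log ‖ξ α - ξ β‖ + N * K := by
    rw [← Finset.add_sum_erase _ _ hβmem]
    refine add_le_add_right ?_ _
    calc (∑ b ∈ (Finset.univ.erase α).erase β, Real.log ‖ξ α - ξ b‖)
        ≤ ((Finset.univ.erase α).erase β).card • K :=
          Finset.sum_le_card_nsmul _ _ _ fun b hb =>
            hgK α b (Finset.ne_of_mem_erase (Finset.mem_of_mem_erase hb)).symm
      _ = (((Finset.univ.erase α).erase β).card : ℝ) * K := nsmul_eq_mul _ _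
      _ ≤ N * K := by
          refine mul_le_mul_of_nonneg_right ?_ hK.le
          have : ((Finset.univ.erase α).erase β).card ≤ N :=
            le_trans Finset.card_erase_le (hNcard α)
          exact_mod_cast this
  have hinnerβ : (∑ b ∈ Finset.univ.erase β, Real.log ‖ξ β - ξ b‖) ≤
      Real.log ‖ξ α - ξ β‖ + N * K := by
    rw [← Finset.add_sum_erase _ _ hαmem, norm_sub_rev]
    refine add_le_add_right ?_ _
    calc (∑ b ∈ (Finset.univ.erase β).erase α, Real.log ‖ξ β - ξ b‖)
        ≤ ((Finset.univ.erase β).erase α).card • K :=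
          Finset.sum_le_card_nsmul _ _ _ fun b hb =>
            hgK β b (Finset.ne_of_mem_erase (Finset.mem_of_mem_erase hb)).symm
      _ = (((Finset.univ.erase β).erase α).card : ℝ) * K := nsmul_eq_mul _ _
      _ ≤ N * K := by
          refine mul_le_mul_of_nonneg_right ?_ hK.le
          have : ((Finset.univ.erase β).erase α).card ≤ N :=
            le_trans Finset.card_erase_le (hNcard β)
          exact_mod_cast this
  have hSup : S ≤ 2 * Real.log ‖ξ α - ξ β‖ + (2 * N + N * N) * K := by
    have e1 : (∑ b ∈ Finset.univ.erase α, Real.log ‖ξ α - ξ b‖) +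
        ∑ a ∈ Finset.univ.erase α, ∑ b ∈ Finset.univ.erase a, Real.log ‖ξ a - ξ b‖ =
        ∑ a, ∑ b ∈ Finset.univ.erase a, Real.log ‖ξ a - ξ b‖ :=
      Finset.add_sum_erase _ (fun a => ∑ b ∈ Finset.univ.erase a, Real.log ‖ξ a - ξ b‖)
        (Finset.mem_univ α)
    have e2 : (∑ b ∈ Finset.univ.erase β, Real.log ‖ξ β - ξ b‖) +
        ∑ a ∈ (Finset.univ.erase α).erase β,
          ∑ b ∈ Finset.univ.erase a, Real.log ‖ξ a - ξ b‖ =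
        ∑ a ∈ Finset.univ.erase α, ∑ b ∈ Finset.univ.erase a, Real.log ‖ξ a - ξ b‖ :=
      Finset.add_sum_erase _ (fun a => ∑ b ∈ Finset.univ.erase a, Real.log ‖ξ a - ξ b‖) hβmem
    have hrest : (∑ a ∈ (Finset.univ.erase α).erase β,
        ∑ b ∈ Finset.univ.erase a, Real.log ‖ξ a - ξ b‖) ≤ N * (N * K) := by
      calc (∑ a ∈ (Finset.univ.erase α).erase β,
          ∑ b ∈ Finset.univ.erase a, Real.log ‖ξ a - ξ b‖)
          ≤ ((Finset.univ.erase α).erase β).card • (N * K) :=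
            Finset.sum_le_card_nsmul _ _ _ fun a _ => hinner a
        _ = (((Finset.univ.erase α).erase β).card : ℝ) * (N * K) := nsmul_eq_mul _ _
        _ ≤ N * (N * K) := by
            refine mul_le_mul_of_nonneg_right ?_ (by positivity)
            have : ((Finset.univ.erase α).erase β).card ≤ N :=
              le_trans Finset.card_erase_le (hNcard α)
            exact_mod_cast this
    linarith [hinnerα, hinnerβ, hrest, e1, e2, hS]
  -- conclude
  have hd : (0 : ℝ) < ‖ξ α - ξ β‖ := by
    rw [norm_pos_iff, sub_ne_zero]
    exact hξne α β hαβ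
  have hlog : -L ≤ Real.log ‖ξ α - ξ β‖ := by
    rw [hL]; linarith
  calc Real.exp (-L) ≤ Real.exp (Real.log ‖ξ α - ξ β‖) := Real.exp_le_exp.mpr hlog
    _ = ‖ξ α - ξ β‖ := Real.exp_log hd
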